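/- Let G be a free product of cyclic groups and let g be represented by a cyclically reduced, non-self-overlapping reduced word of length at least 2. For every cyclically reduced word w of length at most |g| representing an element h, either w is a cyclic conjugate of the reduced word of g or of g^{-1}, or the homogenized Brooks quasimorphism satisfies φ̄_g(h) = 0. -/

import Mathlib

open Monoid

variable {ι : Type*} [DecidableEq ι] {M : ι → Type*} [∀ i, Group (M i)]
  [∀ i, DecidableEq (M i)] [∀ i, IsCyclic (M i)]

/-- The reduced word (as a list of letters) representing an element of a free product. -/
noncomputable def wordOf (g : CoprodI M) : List (Σ i, M i) :=
  (CoprodI.Word.equiv g).toList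

/-- The number of occurrences of `w` as a (contiguous) subword of `l`. -/
def countOcc (w l : List (Σ i, M i)) : ℕ :=
  ((List.range (l.length + 1)).filter fun k => decide ((l.drop k).take w.length = w)).length

/-- The Brooks counting function `φ_g(h) = C_g(h) - C_{g⁻¹}(h)`. -/
noncomputable def brooks (g h : CoprodI M) : ℤ :=
  (countOcc (wordOf g) (wordOf h) : ℤ) - (countOcc (wordOf g⁻¹) (wordOf h) : ℤ)

/-- A reduced word is cyclically reduced if (when it has length at least two) its first and
last letters lie in different factors. -/
def CyclicallyReduced (l : List (Σ i, M i)) : Prop :=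
  2 ≤ l.length → ∀ x ∈ l.head?, ∀ y ∈ l.getLast?, x.1 ≠ y.1

/-- A word is self-overlapping if it can be written as `v ++ u ++ v` with `v` nontrivial. -/
def SelfOverlapping (l : List (Σ i, M i)) : Prop :=
  ∃ v u : List (Σ i, M i), v ≠ [] ∧ l = v ++ u ++ v

namespace BrooksAux

lemma length_flatten_replicate {α : Type*} (n : ℕ) (w : List α) :
    ((List.replicate n w).flatten).length = n * w.length := by
  induction n with
  | zero => simp
  | succ n ih => simp [List.replicate_succ, ih, Nat.succ_mul]; ring

lemma getElem_flatten_replicate {α : Type*} {n : ℕ} {w : List α} (hp : 0 < w.length)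
    {j : ℕ} (hj : j < ((List.replicate n w).flatten).length) :
    ((List.replicate n w).flatten)[j] = w[j % w.length]'(Nat.mod_lt _ hp) := by
  induction n generalizing j with
  | zero => simp at hj
  | succ n ih =>
    rw [length_flatten_replicate] at hj
    have he : (List.replicate (n+1) w).flatten = w ++ (List.replicate n w).flatten := by
      rw [List.replicate_succ, List.flatten_cons]
    rw [List.getElem_of_eq he]
    by_cases hjp : j < w.length
    · rw [List.getElem_append_left hjp]
      simp [Nat.mod_eq_of_lt hjp]
    · push_neg at hjp
      have hj' : j - w.length < ((List.replicate n w).flatten).length := by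
        rw [length_flatten_replicate]
        have hmul : (n+1) * w.length = w.length + n * w.length := by ring
        omega
      rw [List.getElem_append_right hjp, ih hj']
      congr 1
      conv_rhs => rw [show j = w.length + (j - w.length) by omega]
      rw [Nat.add_mod_left]

lemma rotate_back {α : Type*} (w : List α) (hw : w ≠ []) (r : ℕ) :
    ∃ s, w = (w.rotate r).rotate s := by
  have hl : 0 < w.length := List.length_pos_iff.2 hw
  refine ⟨w.length - r % w.length, ?_⟩
  rw [List.rotate_rotate]
  have hmod : (r + (w.length - r % w.length)) % w.length = 0 := by
    have h1 := Nat.div_add_mod r w.length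
    have h2 : r % w.length < w.length := Nat.mod_lt _ hl
    have h3 : r + (w.length - r % w.length) = w.length * (r / w.length + 1) := by
      rw [Nat.mul_succ]; omega
    rw [h3, Nat.mul_mod_right]
  rw [← List.rotate_mod, hmod, List.rotate_zero]

/-- Core combinatorial lemma: a non-self-overlapping word `gl` of length ≥ 2 occurring
in a power of a word `w` with `|w| ≤ |gl|` must be a rotation of `w`. -/
lemma occ_in_power {α : Type*} (gl w : List α) (n k : ℕ)
    (hg2 : 2 ≤ gl.length)
    (hso : ¬ ∃ v u : List α, v ≠ [] ∧ gl = v ++ u ++ v)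
    (hwl : w.length ≤ gl.length)
    (hocc : ((((List.replicate n w).flatten).drop k).take gl.length) = gl) :
    ∃ r, gl = w.rotate r := by
  set J := (List.replicate n w).flatten with hJ
  set L := gl.length with hL
  set p := w.length with hp
  have hJlen : J.length = n * p := length_flatten_replicate n w
  have hkL : k + L ≤ n * p := by
    have := congrArg List.length hocc
    simp [List.length_take, List.length_drop, hJlen] at this
    omega
  have hp0 : 0 < p := by
    rcases Nat.eq_zero_or_pos p with h0 | h0
    · exfalso; rw [h0, Nat.mul_zero] at hkL; omega
    · exact h0
  have hidx : ∀ i (hi : i < L), gl[i]'(hi) = w[(k + i) % p]'(Nat.mod_lt _ hp0) := by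
    intro i hi
    have hki : k + i < J.length := by omega
    have h1 : gl[i]'(hi) = ((J.drop k).take L)[i]'(by
        simp [List.length_take, List.length_drop, hJlen]; omega) :=
      (List.getElem_of_eq hocc.symm hi)
    rw [h1]
    rw [List.getElem_take, List.getElem_drop]
    exact getElem_flatten_replicate hp0 hki
  by_cases hpL : p = L
  · refine ⟨k % p, ?_⟩
    apply List.ext_getElem
    · simp only [List.length_rotate]; exact hpL.symm
    · intro i h1 h2
      rw [List.getElem_rotate]
      rw [hidx i h1]
      congr 1
      rw [← hp]
      conv_lhs => rw [Nat.add_comm k i, Nat.add_mod]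
      conv_rhs => rw [Nat.add_mod]
      rw [Nat.mod_mod_of_dvd _ dvd_rfl]
  · exfalso
    have hpL' : p < L := lt_of_le_of_ne hwl hpL
    obtain ⟨t, ht1, ht2, htL, hdvd⟩ :
        ∃ t, 1 ≤ t ∧ 2 * t ≤ L ∧ t ≤ L ∧ p ∣ (L - t) := by
      by_cases hd : L % p = 0
      · refine ⟨p, hp0, ?_, le_of_lt hpL', ?_⟩
        · obtain ⟨c, hc⟩ := Nat.dvd_of_mod_eq_zero hd
          have hc2 : 2 ≤ c := by
            rcases Nat.lt_or_ge c 2 with h | h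
            · interval_cases c <;> omega
            · exact h
          calc 2 * p ≤ c * p := Nat.mul_le_mul_right p hc2
          _ = L := by rw [hc, Nat.mul_comm]
        · exact Nat.dvd_sub (Nat.dvd_of_mod_eq_zero hd) dvd_rfl
      · refine ⟨L % p, Nat.pos_of_ne_zero hd, ?_, ?_, ?_⟩
        · have h1 := Nat.div_add_mod L p
          have h2 : L % p < p := Nat.mod_lt _ hp0
          have h3 : 1 ≤ L / p := by
            rw [Nat.le_div_iff_mul_le hp0]; omega
          have h4 : p * 1 ≤ p * (L / p) := Nat.mul_le_mul_left p h3
          omega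
        · exact le_of_lt (lt_of_lt_of_le (Nat.mod_lt _ hp0) hwl)
        · have h1 := Nat.div_add_mod L p
          exact ⟨L / p, by omega⟩
    obtain ⟨q, hq⟩ := hdvd
    have hborder : ∀ i (hi : i < t), gl[i]'(by omega) = gl[L - t + i]'(by omega) := by
      intro i hi
      rw [hidx i (by omega), hidx (L - t + i) (by omega)]
      congr 1
      have : k + (L - t + i) = (k + i) + p * q := by omega
      rw [this, Nat.add_mul_mod_self_left]
    apply hso
    refine ⟨gl.take t, (gl.drop t).take (L - 2 * t), ?_, ?_⟩
    · intro hnil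
      have h0 : (gl.take t).length = 0 := by rw [hnil]; rfl
      rw [List.length_take] at h0
      omega
    · have hsuffix : gl.drop (L - t) = gl.take t := by
        apply List.ext_getElem
        · simp [List.length_drop, List.length_take]; omega
        · intro i h1 h2
          rw [List.getElem_drop, List.getElem_take]
          exact (hborder i (by simp [List.length_drop] at h1; omega)).symm
      calc gl = gl.take (L - t) ++ gl.drop (L - t) := (List.take_append_drop _ _).symm
        _ = (gl.take t ++ (gl.drop t).take (L - 2 * t)) ++ gl.take t := by
            rw [hsuffix]
            congr 1
            have : L - t = t + (L - 2 * t) := by omega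
            rw [this, List.take_add]

section Group

open Monoid CoprodI

variable {ι : Type*} [DecidableEq ι] {M : ι → Type*} [∀ i, Group (M i)]
  [∀ i, DecidableEq (M i)]

lemma wordOf_prod (w : Word M) : wordOf w.prod = w.toList := by
  have h : (Word.equiv (M := M)).symm w = w.prod := rfl
  rw [wordOf, ← h, Equiv.apply_symm_apply]

lemma prod_wordOf (g : CoprodI M) :
    ((wordOf g).map fun l => (CoprodI.of l.snd : CoprodI M)).prod = g :=
  (Word.equiv (M := M)).symm_apply_apply g

lemma wordOf_ne_one (g : CoprodI M) : ∀ l ∈ wordOf g, Sigma.snd l ≠ 1 :=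
  (Word.equiv g).ne_one

lemma wordOf_chain (g : CoprodI M) :
    (wordOf g).Chain' fun a b => a.1 ≠ b.1 :=
  (Word.equiv g).chain_ne

lemma wordOf_one : wordOf (1 : CoprodI M) = [] := by
  rw [← Word.prod_empty, wordOf_prod]; rfl

def invw (l : List (Σ i, M i)) : List (Σ i, M i) :=
  (l.map fun x => ⟨x.1, x.2⁻¹⟩).reverse

lemma invw_length (l : List (Σ i, M i)) : (invw l).length = l.length := by
  simp [invw]

lemma invw_invw (l : List (Σ i, M i)) : invw (invw l) = l := by
  unfold invw
  rw [List.map_reverse, List.reverse_reverse, List.map_map]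
  have : ((fun x : (Σ i, M i) => (⟨x.1, x.2⁻¹⟩ : Σ i, M i)) ∘
      fun x : (Σ i, M i) => (⟨x.1, x.2⁻¹⟩ : Σ i, M i)) = id := by
    funext x; simp
  rw [this, List.map_id]

lemma invw_append3 (a b : List (Σ i, M i)) :
    invw (a ++ b ++ a) = invw a ++ invw b ++ invw a := by
  simp [invw, List.map_append, List.reverse_append, List.append_assoc]

lemma invw_ne_nil {l : List (Σ i, M i)} (h : l ≠ []) : invw l ≠ [] := by
  intro hnil
  apply h
  have := congrArg List.length hnil
  rw [invw_length] at this
  exact List.length_eq_zero_iff.1 this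

lemma wordOf_inv (g : CoprodI M) : wordOf g⁻¹ = invw (wordOf g) := by
  have h1 : ∀ x ∈ invw (wordOf g), Sigma.snd x ≠ 1 := by
    intro x hx
    rw [invw, List.mem_reverse, List.mem_map] at hx
    obtain ⟨y, hy, rfl⟩ := hx
    exact inv_ne_one.2 (wordOf_ne_one g y hy)
  have h2 : (invw (wordOf g)).Chain' fun a b => a.1 ≠ b.1 := by
    show List.IsChain _ _
    rw [invw, List.isChain_reverse, List.isChain_map]
    exact (wordOf_chain g).imp fun a b hab => Ne.symm hab
  have hprod : Word.prod ⟨invw (wordOf g), h1, h2⟩ = g⁻¹ := by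
    show ((invw (wordOf g)).map fun l => (CoprodI.of l.snd : CoprodI M)).prod = g⁻¹
    have key : ((invw (wordOf g)).map fun l => (CoprodI.of l.snd : CoprodI M)).prod
        = (((wordOf g).map fun l => (CoprodI.of l.snd : CoprodI M)).prod)⁻¹ := by
      rw [List.prod_inv_reverse, List.map_map]
      unfold invw
      rw [List.map_reverse, List.map_map]
      congr 2
      try (funext x; simp)
    rw [key, prod_wordOf]
  rw [← hprod, wordOf_prod]

lemma chain'_flatten_replicate {α : Type*} {R : α → α → Prop} {l : List α}
    (hl : l.Chain' R) (hne : l ≠ [])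
    (hlast : ∀ x ∈ l.getLast?, ∀ y ∈ l.head?, R x y) (n : ℕ) :
    ((List.replicate n l).flatten).Chain' R := by
  induction n with
  | zero => exact List.isChain_nil
  | succ n ih =>
    rw [List.replicate_succ, List.flatten_cons]
    apply List.isChain_append.2
    refine ⟨hl, ih, ?_⟩
    intro x hx y hy
    apply hlast x hx
    cases n with
    | zero => simp at hy
    | succ m =>
      rw [List.replicate_succ, List.flatten_cons] at hy
      obtain ⟨a, t, rfl⟩ : ∃ a t, l = a :: t := by
        cases l with
        | nil => exact absurd rfl hne
        | cons a t => exact ⟨a, t, rfl⟩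
      simpa using hy

lemma wordOf_pow (h : CoprodI M) (h2 : 2 ≤ (wordOf h).length)
    (hcyc : CyclicallyReduced (wordOf h)) (n : ℕ) :
    wordOf (h ^ n) = (List.replicate n (wordOf h)).flatten := by
  have hne : wordOf h ≠ [] := by
    intro hnil; rw [hnil] at h2; simp at h2
  have h1 : ∀ x ∈ (List.replicate n (wordOf h)).flatten, Sigma.snd x ≠ 1 := by
    intro x hx
    rw [List.mem_flatten] at hx
    obtain ⟨s, hs, hxs⟩ := hx
    rw [List.eq_of_mem_replicate hs] at hxs
    exact wordOf_ne_one h x hxs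
  have hch : ((List.replicate n (wordOf h)).flatten).Chain' fun a b => a.1 ≠ b.1 := by
    apply chain'_flatten_replicate (wordOf_chain h) hne _ n
    intro x hx y hy
    exact Ne.symm (hcyc h2 y hy x hx)
  have hprod : Word.prod ⟨(List.replicate n (wordOf h)).flatten, h1, hch⟩ = h ^ n := by
    show (((List.replicate n (wordOf h)).flatten).map
      fun l => (CoprodI.of l.snd : CoprodI M)).prod = h ^ n
    rw [List.map_flatten, List.map_replicate, List.prod_flatten, List.map_replicate,
      List.prod_replicate, prod_wordOf]
  rw [← hprod, wordOf_prod]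

lemma wordOf_of {i : ι} (m : M i) (hm : m ≠ 1) :
    wordOf (CoprodI.of m : CoprodI M) = [⟨i, m⟩] := by
  have h1 : ∀ x ∈ [(⟨i, m⟩ : Σ i, M i)], Sigma.snd x ≠ 1 := by
    intro x hx
    rw [List.mem_singleton] at hx
    subst hx
    exact hm
  have h2 : ([(⟨i, m⟩ : Σ i, M i)]).Chain' fun a b => a.1 ≠ b.1 := List.isChain_singleton _
  have hprod : Word.prod ⟨[⟨i, m⟩], h1, h2⟩ = (CoprodI.of m : CoprodI M) := by
    show (([(⟨i, m⟩ : Σ i, M i)]).map fun l => (CoprodI.of l.snd : CoprodI M)).prod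
      = (CoprodI.of m : CoprodI M)
    simp
  rw [← hprod, wordOf_prod]

lemma countOcc_eq_zero {w l : List (Σ i, M i)}
    (h : ∀ k, ¬ ((l.drop k).take w.length = w)) :
    countOcc w l = 0 := by
  unfold countOcc
  rw [List.length_eq_zero_iff]
  apply List.filter_eq_nil_iff.2
  intro k _
  simpa using h k

end Group

end BrooksAux

open BrooksAux in
/-- If `h` is represented by a cyclically reduced word of length at most `|g|`, then either
that word is a cyclic conjugate of the reduced word of `g` or of `g⁻¹`, or the homogenized
Brooks quasimorphism vanishes: `φ̄_g(h) = 0`. -/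
theorem brooks_homogenization_vanishes (g : CoprodI M)
    (hlen : 2 ≤ (wordOf g).length)
    (hcyc : CyclicallyReduced (wordOf g))
    (hso : ¬ SelfOverlapping (wordOf g))
    (h : CoprodI M)
    (hw : CyclicallyReduced (wordOf h))
    (hwlen : (wordOf h).length ≤ (wordOf g).length) :
    (∃ n : ℕ, wordOf h = (wordOf g).rotate n ∨ wordOf h = (wordOf g⁻¹).rotate n) ∨
      Filter.Tendsto (fun n : ℕ => (brooks g (h ^ n) : ℝ) / (n : ℝ))
        Filter.atTop (nhds 0) := by
  by_cases hrot : ∃ n : ℕ, wordOf h = (wordOf g).rotate n ∨ wordOf h = (wordOf g⁻¹).rotate n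
  · exact Or.inl hrot
  right
  push_neg at hrot
  have hglen' : (wordOf g⁻¹).length = (wordOf g).length := by
    rw [wordOf_inv, invw_length]
  have hso' : ¬ SelfOverlapping (wordOf g⁻¹) := by
    rintro ⟨v, u, hv, he⟩
    apply hso
    have hgv : wordOf g = invw (wordOf g⁻¹) := by rw [wordOf_inv, invw_invw]
    rw [he, invw_append3] at hgv
    exact ⟨invw v, invw u, invw_ne_nil hv, hgv⟩
  have hne_g : wordOf g ≠ [] := by
    intro hnil; rw [hnil] at hlen; simp at hlen
  -- key: counts vanish
  have hzero : ∀ n : ℕ, brooks g (h ^ n) = 0 := by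
    intro n
    have hnocc : ∀ k, ¬ (((wordOf (h ^ n)).drop k).take (wordOf g).length = wordOf g) ∧
        ¬ (((wordOf (h ^ n)).drop k).take (wordOf g⁻¹).length = wordOf g⁻¹) := by
      by_cases h2 : 2 ≤ (wordOf h).length
      · -- the power is the flattened replicate
        have hpow := wordOf_pow h h2 hw n
        intro k
        constructor
        · intro hocc
          rw [hpow] at hocc
          obtain ⟨r, hr⟩ := occ_in_power (wordOf g) (wordOf h) n k hlen hso hwlen hocc
          obtain ⟨s, hs⟩ := rotate_back (wordOf h)
            (by intro hnil; rw [hnil] at h2; simp at h2) r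
          rw [← hr] at hs
          exact (hrot s).1 hs
        · intro hocc
          rw [hpow] at hocc
          obtain ⟨r, hr⟩ := occ_in_power (wordOf g⁻¹) (wordOf h) n k (hglen' ▸ hlen) hso'
            (hglen' ▸ hwlen) hocc
          obtain ⟨s, hs⟩ := rotate_back (wordOf h)
            (by intro hnil; rw [hnil] at h2; simp at h2) r
          rw [← hr] at hs
          exact (hrot s).2 hs
      · -- short word: h is trivial or a single letter, so wordOf (h^n) is short
        have hshort : (wordOf (h ^ n)).length < 2 := by
          push_neg at h2
          interval_cases hl : (wordOf h).length
          · -- length 0 : h = 1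
            have hnil : wordOf h = [] := List.length_eq_zero_iff.1 hl
            have h1 : h = 1 := by
              have := prod_wordOf h
              rw [hnil] at this
              simpa using this.symm
            rw [h1, one_pow, wordOf_one]
            simp
          · -- length 1 : h = of m
            obtain ⟨x, hx⟩ := List.length_eq_one_iff.1 hl
            have h1 : h = CoprodI.of x.2 := by
              have := prod_wordOf h
              rw [hx] at this
              simpa using this.symm
            obtain ⟨i, m⟩ := x
            rw [h1, ← map_pow]
            by_cases hm : m ^ n = 1
            · rw [hm, map_one, wordOf_one]; simp
            · rw [wordOf_of (m ^ n) hm]; simp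
        intro k
        constructor
        · intro hocc
          have := congrArg List.length hocc
          simp [List.length_take, List.length_drop] at this
          omega
        · intro hocc
          have := congrArg List.length hocc
          simp [List.length_take, List.length_drop] at this
          omega
    have hc1 : countOcc (wordOf g) (wordOf (h ^ n)) = 0 :=
      countOcc_eq_zero fun k => (hnocc k).1
    have hc2 : countOcc (wordOf g⁻¹) (wordOf (h ^ n)) = 0 :=
      countOcc_eq_zero fun k => (hnocc k).2
    simp [brooks, hc1, hc2]
  have heq : (fun n : ℕ => (brooks g (h ^ n) : ℝ) / (n : ℝ)) = fun _ => (0 : ℝ) := by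
    funext n
    rw [hzero n]
    simp
  rw [heq]
  exact tendsto_const_nhds
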